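/- For positive integers k, n and real x < 1, define the iterated-integral sequence Q_n by Q_0(x) = 1 and Q_n(x) = ∫_x^1 ∫_{x_1}^1 ⋯ ∫_{x_{k-1}}^1 Q_{n-1}(x_k − 1) dx_k ⋯ dx_1. Then Q_n(x) equals the volume of the set {(x_1,…,x_{nk}) ∈ ℝ^{nk} : x < x_1 < ⋯ < x_{nk} and x_{jk} < j for j = 1,…,n}. -/

import Mathlib

open Nat MeasureTheory

/-- `iterInt g j x` is the `j`-fold iterated integral
`∫_x^1 ∫_{x₁}^1 ⋯ ∫_{x_{j-1}}^1 g(x_j) dx_j ⋯ dx₁`. -/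
noncomputable def iterInt (g : ℝ → ℝ) : ℕ → ℝ → ℝ
  | 0, x => g x
  | (j + 1), x => ∫ t in x..1, iterInt g j t

set_option maxRecDepth 4000

namespace Stmt9Aux

open Set

def Sset (N : ℕ) (b : ℕ → ℝ) (x : ℝ) : Set (Fin N → ℝ) :=
  {y | (∀ i j : Fin N, i < j → y i < y j) ∧ (∀ i : Fin N, (i : ℕ) = 0 → x < y i) ∧
    ∀ i : Fin N, y i < b (i : ℕ)}

lemma measurableSet_imp {α : Type*} [MeasurableSpace α] (c : Prop) {S : Set α}
    (hS : MeasurableSet S) : MeasurableSet {a | c → a ∈ S} := by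
  by_cases h : c
  · simpa [h] using hS
  · simp [h]

lemma measurableSet_T (N : ℕ) (b : ℕ → ℝ) (x : ℝ) :
    MeasurableSet {p : ℝ × (Fin N → ℝ) |
      x < p.1 ∧ p.1 < b 0 ∧ (∀ i j : Fin N, i < j → p.2 i < p.2 j) ∧
      (∀ i : Fin N, (i : ℕ) = 0 → p.1 < p.2 i) ∧ ∀ i : Fin N, p.2 i < b ((i : ℕ) + 1)} := by
  refine MeasurableSet.inter (measurableSet_lt measurable_const measurable_fst)
    (MeasurableSet.inter (measurableSet_lt measurable_fst measurable_const)
    (MeasurableSet.inter ?_ (MeasurableSet.inter ?_ ?_)))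
  · show MeasurableSet {p : ℝ × (Fin N → ℝ) | ∀ i j : Fin N, i < j → p.2 i < p.2 j}
    rw [setOf_forall]
    refine MeasurableSet.iInter fun i => ?_
    rw [setOf_forall]
    refine MeasurableSet.iInter fun j => ?_
    exact measurableSet_imp _ (measurableSet_lt ((by fun_prop : Measurable fun p : ℝ × (Fin N → ℝ) => p.2 i))
      ((by fun_prop : Measurable fun p : ℝ × (Fin N → ℝ) => p.2 j)))
  · show MeasurableSet {p : ℝ × (Fin N → ℝ) | ∀ i : Fin N, (i : ℕ) = 0 → p.1 < p.2 i}
    rw [setOf_forall]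
    refine MeasurableSet.iInter fun i => ?_
    exact measurableSet_imp _ (measurableSet_lt measurable_fst
      ((by fun_prop : Measurable fun p : ℝ × (Fin N → ℝ) => p.2 i)))
  · show MeasurableSet {p : ℝ × (Fin N → ℝ) | ∀ i : Fin N, p.2 i < b ((i : ℕ) + 1)}
    rw [setOf_forall]
    refine MeasurableSet.iInter fun i => ?_
    exact measurableSet_lt ((by fun_prop : Measurable fun p : ℝ × (Fin N → ℝ) => p.2 i)) measurable_const

lemma Sset_peel (N : ℕ) (b : ℕ → ℝ) (x : ℝ) :
    volume (Sset (N + 1) b x)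
      = ∫⁻ t in Ioo x (b 0), volume (Sset N (fun i => b (i + 1)) t) := by
  set T : Set (ℝ × (Fin N → ℝ)) := {p |
      x < p.1 ∧ p.1 < b 0 ∧ (∀ i j : Fin N, i < j → p.2 i < p.2 j) ∧
      (∀ i : Fin N, (i : ℕ) = 0 → p.1 < p.2 i) ∧ ∀ i : Fin N, p.2 i < b ((i : ℕ) + 1)}
      with hTdef
  have hTm : MeasurableSet T := measurableSet_T N b x
  have hpre : Sset (N + 1) b x
      = (MeasurableEquiv.piFinSuccAbove (fun _ : Fin (N + 1) => ℝ) 0) ⁻¹' T := by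
    ext y
    simp only [Sset, mem_setOf_eq, mem_preimage, MeasurableEquiv.piFinSuccAbove_apply,
      hTdef, Fin.zero_succAbove]
    constructor
    · rintro ⟨h1, h2, h3⟩
      refine ⟨h2 0 rfl, by simpa using h3 0, fun i j hij => h1 i.succ j.succ (Fin.succ_lt_succ_iff.mpr hij),
        fun i _ => h1 0 i.succ (Fin.succ_pos i), fun i => by simpa [Fin.tail] using h3 i.succ⟩
    · rintro ⟨h1, h2, h3, h4, h5⟩
      refine ⟨?_, ?_, ?_⟩
      · intro i j hij
        rcases Fin.eq_zero_or_eq_succ i with rfl | ⟨i', rfl⟩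
        · rcases Fin.eq_zero_or_eq_succ j with rfl | ⟨j', rfl⟩
          · exact absurd hij (lt_irrefl _)
          · rcases Nat.eq_zero_or_pos (j' : ℕ) with hj0 | hj0
            · exact h4 j' hj0
            · exact lt_trans (h4 ⟨0, j'.pos⟩ rfl) (h3 ⟨0, j'.pos⟩ j' (by
                rw [Fin.lt_def]; exact hj0))
        · rcases Fin.eq_zero_or_eq_succ j with rfl | ⟨j', rfl⟩
          · exact absurd hij (by rw [Fin.lt_def, Fin.val_succ, Fin.val_zero]; omega)
          · exact h3 i' j' (Fin.succ_lt_succ_iff.mp hij)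
      · intro i hi
        have : i = 0 := Fin.ext hi
        subst this
        exact h1
      · intro i
        rcases Fin.eq_zero_or_eq_succ i with rfl | ⟨i', rfl⟩
        · exact h2
        · simpa [Fin.tail] using h5 i'
  rw [hpre,
    (volume_preserving_piFinSuccAbove (fun _ : Fin (N + 1) => ℝ) 0).measure_preimage
      hTm.nullMeasurableSet]
  rw [Measure.volume_eq_prod, Measure.prod_apply hTm, ← lintegral_indicator measurableSet_Ioo]
  refine lintegral_congr fun t => ?_
  by_cases ht : t ∈ Ioo x (b 0)
  · rw [indicator_of_mem ht]
    congr 1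
    ext y
    simp [hTdef, Sset, ht.1, ht.2]
  · rw [indicator_of_notMem ht]
    have : Prod.mk t ⁻¹' T = ∅ := by
      ext y
      simp only [hTdef, mem_preimage, mem_setOf_eq, mem_empty_iff_false, iff_false, not_and]
      intro h1 h2
      exact absurd (mem_Ioo.2 ⟨h1, h2⟩) ht
    simp [this]

lemma Sset_antitone (N : ℕ) (b : ℕ → ℝ) :
    Antitone fun x => volume (Sset N b x) := by
  intro x₁ x₂ h
  refine measure_mono fun y hy => ⟨hy.1, fun i hi => lt_of_le_of_lt h (hy.2.1 i hi), hy.2.2⟩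

lemma Sset_finite (N : ℕ) (b : ℕ → ℝ) (x : ℝ) : volume (Sset N b x) < ⊤ := by
  cases N with
  | zero =>
      have h1 : volume (univ : Set (Fin 0 → ℝ)) = 1 := by
        rw [MeasureTheory.volume_pi, Measure.pi_univ]
        simp
      exact lt_of_le_of_lt (measure_mono (subset_univ _)) (by rw [h1]; exact ENNReal.one_lt_top)
  | succ M =>
      refine lt_of_le_of_lt (measure_mono (?_ : Sset (M + 1) b x ⊆
        univ.pi fun i : Fin (M + 1) => Ioo x (b (i : ℕ)))) ?_
      · intro y hy
        rw [mem_pi]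
        intro i _
        refine ⟨?_, hy.2.2 i⟩
        rcases Nat.eq_zero_or_pos (i : ℕ) with h0 | h0
        · exact hy.2.1 i h0
        · exact lt_trans (hy.2.1 0 rfl) (hy.1 0 i (by rw [Fin.lt_def]; exact h0))
      · rw [volume_pi_pi]
        refine ENNReal.prod_lt_top fun i _ => ?_
        rw [Real.volume_Ioo]
        exact ENNReal.ofReal_lt_top

lemma Sset_translate (N : ℕ) (b : ℕ → ℝ) (x : ℝ) :
    volume (Sset N (fun i => b i + 1) x) = volume (Sset N b (x - 1)) := by
  have h : Sset N (fun i => b i + 1) x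
      = (fun y : Fin N → ℝ => y + fun _ => (-1 : ℝ)) ⁻¹' Sset N b (x - 1) := by
    ext y
    simp only [Sset, mem_setOf_eq, mem_preimage, Pi.add_apply]
    constructor
    · rintro ⟨h1, h2, h3⟩
      exact ⟨fun i j hij => by have := h1 i j hij; linarith,
        fun i hi => by have := h2 i hi; linarith, fun i => by have := h3 i; linarith⟩
    · rintro ⟨h1, h2, h3⟩
      exact ⟨fun i j hij => by have := h1 i j hij; linarith,
        fun i hi => by have := h2 i hi; linarith, fun i => by have := h3 i; linarith⟩
  rw [h, measure_preimage_add_right]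

lemma iterInt_congr {g h : ℝ → ℝ} (H : ∀ y : ℝ, y ≤ 1 → g y = h y) :
    ∀ (j : ℕ) (x : ℝ), x ≤ 1 → iterInt g j x = iterInt h j x
  | 0, x, hx => H x hx
  | (j + 1), x, hx => by
      show (∫ t in x..1, iterInt g j t) = ∫ t in x..1, iterInt h j t
      refine intervalIntegral.integral_congr fun t ht => ?_
      rw [Set.uIcc_of_le hx] at ht
      exact iterInt_congr H j t ht.2

lemma Sset_bridge : ∀ (j N : ℕ) (b : ℕ → ℝ), (∀ i, i < j → b i = 1) → ∀ x : ℝ, x ≤ 1 →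
    (volume (Sset (j + N) b x)).toReal
      = iterInt (fun t => (volume (Sset N (fun i => b (i + j)) t)).toReal) j x := by
  intro j
  induction j with
  | zero =>
      intro N b hb x hx
      have e0 : 0 + N = N := Nat.zero_add N
      rw [e0]
      rfl
  | succ j ih =>
      intro N b hb x hx
      have e1 : j + 1 + N = (j + N) + 1 := by omega
      rw [e1, Sset_peel, hb 0 (Nat.succ_pos j)]
      rw [← MeasureTheory.integral_toReal ((Sset_antitone (j + N) _).measurable.aemeasurable)
        (Filter.Eventually.of_forall fun t => Sset_finite _ _ _)]
      conv_rhs => rw [iterInt]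
      rw [intervalIntegral.integral_of_le hx, integral_Ioc_eq_integral_Ioo]
      refine setIntegral_congr_fun measurableSet_Ioo fun t ht => ?_
      have := ih N (fun i => b (i + 1)) (fun i hi => hb (i + 1) (by omega)) t (le_of_lt ht.2)
      exact this

lemma QV (k : ℕ) (hk : 0 < k) (Q : ℕ → ℝ → ℝ)
    (hQ0 : ∀ x : ℝ, Q 0 x = 1)
    (hQ : ∀ m : ℕ, 1 ≤ m → ∀ x : ℝ, Q m x = iterInt (fun y => Q (m - 1) (y - 1)) k x) :
    ∀ (m : ℕ) (x : ℝ), x ≤ 1 →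
      Q m x = (volume (Sset (m * k) (fun i => ((i / k : ℕ) : ℝ) + 1) x)).toReal := by
  intro m
  induction m with
  | zero =>
      intro x hx
      rw [hQ0]
      have e0 : 0 * k = 0 := Nat.zero_mul k
      rw [e0]
      have h1 : Sset 0 (fun i => ((i / k : ℕ) : ℝ) + 1) x = univ := by
        ext y
        simp [Sset]
      have h2 : volume (univ : Set (Fin 0 → ℝ)) = 1 := by
        rw [MeasureTheory.volume_pi, Measure.pi_univ]
        simp
      rw [h1, h2]
      simp
  | succ m ih =>
      intro x hx
      rw [hQ (m + 1) (Nat.le_add_left 1 m) x]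
      simp only [Nat.add_sub_cancel]
      have hcong : iterInt (fun y => Q m (y - 1)) k x
          = iterInt (fun t =>
              (volume (Sset (m * k) (fun i => ((i / k : ℕ) : ℝ) + 1) (t - 1))).toReal) k x :=
        iterInt_congr (fun y hy => ih (y - 1) (by linarith)) k x hx
      rw [hcong]
      have htrans : ∀ t : ℝ,
          (volume (Sset (m * k) (fun i => ((i / k : ℕ) : ℝ) + 1) (t - 1))).toReal
          = (volume (Sset (m * k) (fun i => (((i + k) / k : ℕ) : ℝ) + 1) t)).toReal := by
        intro t
        have hfun : (fun i : ℕ => (((i + k) / k : ℕ) : ℝ) + 1)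
            = fun i : ℕ => (((i / k : ℕ) : ℝ) + 1) + 1 := by
          funext i
          rw [Nat.add_div_right i hk]
          push_cast
          ring
        conv_rhs => rw [hfun, Sset_translate]
      simp only [htrans]
      have e2 : (m + 1) * k = k + m * k := by ring
      rw [e2, Sset_bridge k (m * k) _ (fun i hi => by simp [Nat.div_eq_of_lt hi]) x hx]

end Stmt9Aux

open Set in
theorem stmt9 (k n : ℕ) (hk : 0 < k) (hn : 0 < n) (Q : ℕ → ℝ → ℝ)
    (hQ0 : ∀ x : ℝ, Q 0 x = 1)
    (hQ : ∀ m : ℕ, 1 ≤ m → ∀ x : ℝ, Q m x = iterInt (fun y => Q (m - 1) (y - 1)) k x)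
    (x : ℝ) (hx : x < 1) :
    Q n x = (volume {y : Fin (n * k) → ℝ |
        (∀ i j : Fin (n * k), i < j → y i < y j) ∧
        (∀ i : Fin (n * k), (i : ℕ) = 0 → x < y i) ∧
        (∀ i : Fin (n * k), ∀ j : ℕ, 1 ≤ j → j ≤ n → (i : ℕ) + 1 = j * k →
          y i < j)}).toReal := by
  have hset : {y : Fin (n * k) → ℝ |
        (∀ i j : Fin (n * k), i < j → y i < y j) ∧
        (∀ i : Fin (n * k), (i : ℕ) = 0 → x < y i) ∧
        (∀ i : Fin (n * k), ∀ j : ℕ, 1 ≤ j → j ≤ n → (i : ℕ) + 1 = j * k →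
          y i < j)}
      = Stmt9Aux.Sset (n * k) (fun i => ((i / k : ℕ) : ℝ) + 1) x := by
    ext y
    simp only [Stmt9Aux.Sset, mem_setOf_eq]
    constructor
    · rintro ⟨h1, h2, h3⟩
      refine ⟨h1, h2, fun i => ?_⟩
      obtain ⟨q, hq⟩ : ∃ q, (i : ℕ) / k = q := ⟨_, rfl⟩
      rw [hq]
      have hqn : q < n := hq ▸ (Nat.div_lt_iff_lt_mul hk).2 i.isLt
      have hd : k * q + (i : ℕ) % k = (i : ℕ) := by rw [← hq]; exact Nat.div_add_mod _ _
      have hm : (i : ℕ) % k < k := Nat.mod_lt _ hk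
      have hjk : (q + 1) * k = k * q + k := by ring
      have h1' : (q + 1) * k ≤ n * k := Nat.mul_le_mul_right k (by omega)
      have hlt : (q + 1) * k - 1 < n * k := by omega
      have hcon : y ⟨(q + 1) * k - 1, hlt⟩ < ((q + 1 : ℕ) : ℝ) :=
        h3 ⟨(q + 1) * k - 1, hlt⟩ (q + 1) (by omega) hqn (by
          show (q + 1) * k - 1 + 1 = (q + 1) * k
          omega)
      have hle : (i : ℕ) ≤ (q + 1) * k - 1 := by omega
      have hyle : y i ≤ y ⟨(q + 1) * k - 1, hlt⟩ := by
        rcases eq_or_lt_of_le hle with heq | hlt2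
        · have : i = ⟨(q + 1) * k - 1, hlt⟩ := Fin.ext heq
          rw [this]
        · exact le_of_lt (h1 i ⟨(q + 1) * k - 1, hlt⟩ (by rw [Fin.lt_def]; exact hlt2))
      have hc : ((q + 1 : ℕ) : ℝ) = (q : ℝ) + 1 := by push_cast; ring
      rw [hc] at hcon
      exact lt_of_le_of_lt hyle hcon
    · rintro ⟨h1, h2, h3⟩
      refine ⟨h1, h2, fun i j hj1 hj2 hijk => ?_⟩
      obtain ⟨j', rfl⟩ : ∃ j'', j = j'' + 1 := ⟨j - 1, by omega⟩
      have hexp : (j' + 1) * k = k * j' + k := by ring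
      have hi : (i : ℕ) = k * j' + (k - 1) := by omega
      have hdiv : (i : ℕ) / k = j' := by
        rw [hi, Nat.mul_add_div hk, Nat.div_eq_of_lt (by omega)]
        omega
      have := h3 i
      rw [hdiv] at this
      push_cast
      push_cast at this
      linarith
  rw [hset]
  exact Stmt9Aux.QV k hk Q hQ0 hQ n x (le_of_lt hx)
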